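/- Let G = (V, E) be a countable graph with a group Γ of automorphisms acting transitively and unimodularly, and let Z : V × V → [0,∞) be a function with Z(u,v) = Z(φu, φv) for all φ ∈ Γ (the mass-transport invariance). Then Σ_{v ∈ V} Z(o, v) = Σ_{u ∈ V} Z(u, o) for any fixed root o. -/

import Mathlib

open MulAction ENNReal NNReal

lemma aux_group {V : Type*} [Countable V] (Γ' : Type*) [Group Γ'] [MulAction Γ' V]
    (f : V → ℝ≥0∞) (hf : ∀ (g : Γ') v, f (g • v) = f v)
    (hfin : ∀ v : V, (MulAction.orbit Γ' v).Finite) :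
    ∑' v, f v = ∑' ω : MulAction.orbitRel.Quotient Γ' V,
      ((MulAction.orbit Γ' ω.out).ncard : ℝ≥0∞) * f ω.out := by
  classical
  rw [← (Equiv.sigmaFiberEquiv (fun v : V =>
    (Quotient.mk'' v : MulAction.orbitRel.Quotient Γ' V))).tsum_eq f, ENNReal.tsum_sigma']
  congr 1
  funext ω
  -- fiber equiv orbit
  have hset : ∀ v : V, (Quotient.mk'' v = ω) ↔ v ∈ MulAction.orbit Γ' ω.out := by
    intro v
    rw [← MulAction.orbitRel.Quotient.orbit_eq_orbit_out ω Quotient.out_eq',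
      MulAction.orbitRel.Quotient.mem_orbit]
  let e2 : {v : V // Quotient.mk'' v = ω} ≃ (MulAction.orbit Γ' ω.out) :=
    Equiv.subtypeEquivRight hset
  have h0 : ∀ x : {v : V // Quotient.mk'' v = ω},
      f ((Equiv.sigmaFiberEquiv (fun v : V =>
        (Quotient.mk'' v : MulAction.orbitRel.Quotient Γ' V))) ⟨ω, x⟩) = f x.val :=
    fun x => rfl
  rw [tsum_congr h0, ← e2.symm.tsum_eq (fun x : {v : V // Quotient.mk'' v = ω} => f x.val)]
  have h1 : ∀ a : MulAction.orbit Γ' ω.out, f (e2.symm a).val = f a.val := fun a => by congr 1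
  rw [tsum_congr h1]
  haveI : Fintype (MulAction.orbit Γ' ω.out) := (hfin ω.out).fintype
  rw [tsum_fintype]
  have hconst : ∀ x : MulAction.orbit Γ' ω.out, f x = f ω.out := by
    rintro ⟨x, g, rfl⟩
    exact hf g ω.out
  rw [Finset.sum_congr rfl (fun x _ => hconst x), Finset.sum_const, Finset.card_univ,
    ← Nat.card_coe_set_eq, Nat.card_eq_fintype_card, nsmul_eq_mul]

/-- Mass transport principle (deterministic version): if a group `Γ` acts on the
vertex set of a countable graph `G` by graph automorphisms, transitively and
unimodularly (`|Stab(u)·v| = |Stab(v)·u| < ∞`), and `Z : V × V → [0,∞)` is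
diagonally invariant, then `Σ_v Z(o,v) = Σ_u Z(u,o)`. -/
theorem stmt_9 {V : Type*} [Countable V] (G : SimpleGraph V)
    (Γ : Type*) [Group Γ] [MulAction Γ V]
    (haut : ∀ (g : Γ) (u v : V), G.Adj (g • u) (g • v) ↔ G.Adj u v)
    (htrans : MulAction.IsPretransitive Γ V)
    (hfin : ∀ u v : V, (MulAction.orbit (MulAction.stabilizer Γ u) v).Finite)
    (hunimod : ∀ u v : V,
      (MulAction.orbit (MulAction.stabilizer Γ u) v).ncard
        = (MulAction.orbit (MulAction.stabilizer Γ v) u).ncard)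
    (Z : V → V → NNReal)
    (hinv : ∀ (g : Γ) (u v : V), Z (g • u) (g • v) = Z u v)
    (o : V) :
    (∑' v : V, (Z o v : ℝ≥0∞)) = ∑' u : V, (Z u o : ℝ≥0∞) := by
  classical
  haveI := htrans
  set S := MulAction.stabilizer Γ o with hS
  -- stabilizer elements fix o
  have hso : ∀ s : S, (s : Γ) • o = o := fun s => s.2
  -- invariance of the two slot functions under S
  have hZl : ∀ (s : S) (v : V), Z o ((s : Γ) • v) = Z o v := by
    intro s v
    have h := hinv (s : Γ) o v
    rwa [hso s] at h
  have hZr : ∀ (s : S) (u : V), Z ((s : Γ) • u) o = Z u o := by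
    intro s u
    have h := hinv (s : Γ) u o
    rwa [hso s] at h
  -- Z is constant on S-orbits in each slot
  have hZl' : ∀ {x y : V}, x ∈ MulAction.orbit S y → Z o x = Z o y := by
    rintro x y ⟨s, rfl⟩
    exact hZl s y
  have hZr' : ∀ {x y : V}, x ∈ MulAction.orbit S y → Z x o = Z y o := by
    rintro x y ⟨s, rfl⟩
    exact hZr s y
  -- choose transport elements
  choose g hg using fun a : V => MulAction.exists_smul_eq Γ a o
  set τ : V → V := fun a => g a • o with hτ
  have hga : ∀ a : V, (g a)⁻¹ • o = a := by
    intro a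
    rw [← hg a, inv_smul_smul]
  -- (1) τ respects S-orbits
  have hwd : ∀ {a b : V}, a ∈ MulAction.orbit S b → τ a ∈ MulAction.orbit S (τ b) := by
    rintro a b ⟨s, rfl⟩
    have hs : (s : Γ) • b = (s : Γ) • b := rfl
    refine ⟨⟨g ((s : Γ) • b) * (s : Γ) * (g b)⁻¹, ?_⟩, ?_⟩
    · show (g ((s : Γ) • b) * (s : Γ) * (g b)⁻¹) • o = o
      rw [mul_smul, mul_smul, hga b, ← hg ((s : Γ) • b)]
    · show (g ((s : Γ) • b) * (s : Γ) * (g b)⁻¹) • τ b = τ ((s : Γ) • b)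
      simp only [hτ]
      rw [mul_smul, mul_smul, inv_smul_smul, hso s]
  -- (4) τ is an involution up to S-orbits
  have hinvol : ∀ a : V, τ (τ a) ∈ MulAction.orbit S a := by
    intro a
    refine ⟨⟨g (τ a) * g a, ?_⟩, ?_⟩
    · show (g (τ a) * g a) • o = o
      rw [mul_smul]
      exact hg (τ a)
    · show (g (τ a) * g a) • a = τ (τ a)
      rw [mul_smul, hg a]
  -- (2) cardinality is preserved
  have hcard : ∀ a : V, (MulAction.orbit S (τ a)).ncard = (MulAction.orbit S a).ncard := by
    intro a
    have himg : (fun x => (g a)⁻¹ • x) '' (MulAction.orbit S (τ a))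
        = MulAction.orbit (MulAction.stabilizer Γ a) o := by
      ext x
      constructor
      · rintro ⟨-, ⟨s, rfl⟩, rfl⟩
        refine ⟨⟨(g a)⁻¹ * (s : Γ) * g a, ?_⟩, ?_⟩
        · show ((g a)⁻¹ * (s : Γ) * g a) • a = a
          rw [mul_smul, mul_smul, hg a, hso s, hga a]
        · show ((g a)⁻¹ * (s : Γ) * g a) • o = (g a)⁻¹ • (s : Γ) • τ a
          simp only [hτ, mul_smul]
      · rintro ⟨h, rfl⟩
        refine ⟨(g a * (h : Γ) * (g a)⁻¹) • τ a, ⟨⟨g a * (h : Γ) * (g a)⁻¹, ?_⟩, rfl⟩, ?_⟩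
        · show (g a * (h : Γ) * (g a)⁻¹) • o = o
          simp only [mul_smul, hga a]
          rw [h.2, hg a]
        · simp only [hτ, mul_smul, inv_smul_smul]
          exact (Submonoid.smul_def _ _).symm
    calc (MulAction.orbit S (τ a)).ncard
        = ((fun x => (g a)⁻¹ • x) '' (MulAction.orbit S (τ a))).ncard :=
          (Set.ncard_image_of_injective _ (MulAction.injective ((g a)⁻¹))).symm
      _ = (MulAction.orbit (MulAction.stabilizer Γ a) o).ncard := by rw [himg]
      _ = (MulAction.orbit S a).ncard := hunimod a o
  -- (3) Z value transport
  have hZτ : ∀ a : V, Z (τ a) o = Z o a := by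
    intro a
    have h := hinv (g a) o a
    rw [hg a] at h
    exact h
  -- group both sides over S-orbits
  have hL := aux_group (V := V) S (fun v => (Z o v : ℝ≥0∞))
    (by intro s v
        rw [Submonoid.smul_def]
        exact_mod_cast congrArg ((↑) : ℝ≥0 → ℝ≥0∞) (hZl s v)) (fun v => hfin o v)
  have hR := aux_group (V := V) S (fun u => (Z u o : ℝ≥0∞))
    (by intro s u
        rw [Submonoid.smul_def]
        exact_mod_cast congrArg ((↑) : ℝ≥0 → ℝ≥0∞) (hZr s u)) (fun v => hfin o v)
  rw [hL, hR]
  -- the permutation of orbits induced by τ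
  have hwd' : ∀ a b : V, MulAction.orbitRel (↥S) V a b → MulAction.orbitRel (↥S) V (τ a) (τ b) := by
    intro a b hab
    exact MulAction.orbitRel_apply.mpr (hwd (MulAction.orbitRel_apply.mp hab))
  set σ : MulAction.orbitRel.Quotient S V → MulAction.orbitRel.Quotient S V :=
    Quotient.map' (s₁ := MulAction.orbitRel (↥S) V) (s₂ := MulAction.orbitRel (↥S) V) τ hwd'
    with hσdef
  have hσmk : ∀ a : V, σ (Quotient.mk'' a) = Quotient.mk'' (τ a) := fun a => rfl
  have hσinv : Function.Involutive σ := by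
    intro ω
    induction ω using Quotient.inductionOn' with
    | h a =>
      rw [hσmk, hσmk, Quotient.eq'']
      exact hinvol a
  set p : Equiv.Perm (MulAction.orbitRel.Quotient S V) := hσinv.toPerm with hp
  have key := p.tsum_eq (fun ω : MulAction.orbitRel.Quotient S V =>
    ((MulAction.orbit S ω.out).ncard : ℝ≥0∞) * (Z ω.out o : ℝ≥0∞))
  rw [← key]
  refine tsum_congr fun ω => ?_
  -- p ω = σ ω, and (σ ω).out ∈ orbit S (τ ω.out)
  have hpω : p ω = σ ω := rfl
  have hout : (σ ω).out ∈ MulAction.orbit S (τ ω.out) := by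
    have h1 : σ ω = Quotient.mk'' (τ ω.out) := by
      conv_lhs => rw [← Quotient.out_eq' ω]
      exact hσmk ω.out
    have h2 : (Quotient.mk'' (σ ω).out : MulAction.orbitRel.Quotient (↥S) V)
        = Quotient.mk'' (τ ω.out) := by
      rw [Quotient.out_eq', h1]
    exact Quotient.eq''.mp h2
  have hc : (MulAction.orbit S (p ω).out).ncard = (MulAction.orbit S ω.out).ncard := by
    rw [hpω, MulAction.orbit_eq_iff.mpr hout, hcard]
  have hz : Z (p ω).out o = Z o ω.out := by
    rw [hpω, hZr' hout, hZτ]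
  rw [hc, hz]
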